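/- The function H(α) = 6α·(1/ψ'(α) + 2ψ(α)) satisfies H'(α) = 24α·ψ'(α) + 4ψ(α), where ψ solves 3x·ψ'' + 6x·(ψ')³ − 4ψ·(ψ')² − 3ψ' = 0 with ψ(0)=1, ψ'(0)=−3/4. -/

import Mathlib

/-- `ψ` is an analytic solution near `0` of the singular Cauchy problem
`3x ψ'' + 6x (ψ')³ − 4ψ (ψ')² − 3ψ' = 0`, `ψ(0) = 1`, `ψ'(0) = −3/4`. -/
def GavrilovODE (ψ : ℝ → ℝ) : Prop :=
  AnalyticAt ℝ ψ 0 ∧ ψ 0 = 1 ∧ deriv ψ 0 = -(3/4) ∧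
    ∀ᶠ x in nhds (0:ℝ),
      3 * x * deriv (deriv ψ) x + 6 * x * (deriv ψ x)^3
        - 4 * ψ x * (deriv ψ x)^2 - 3 * deriv ψ x = 0

/-- `H(α) = 6α(1/ψ'(α) + 2ψ(α))` satisfies `H'(α) = 24α ψ'(α) + 4ψ(α)` near `0`. -/
theorem gavrilov_H_deriv (ψ : ℝ → ℝ) (h : GavrilovODE ψ)
    (H : ℝ → ℝ) (hH : ∀ α, H α = 6*α*(1/deriv ψ α + 2*ψ α)) :
    ∀ᶠ α in nhds (0:ℝ), deriv H α = 24*α*deriv ψ α + 4*ψ α := by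
  obtain ⟨hψ, hψ0, hψ'0, hode⟩ := h
  have h1 : ∀ᶠ x in nhds (0:ℝ), AnalyticAt ℝ ψ x := hψ.eventually_analyticAt
  have hd : ∀ᶠ x in nhds (0:ℝ), AnalyticAt ℝ (deriv ψ) x := by
    filter_upwards [h1] with x hx
    have h2 : AnalyticAt ℝ (fun y => fderiv ℝ ψ y 1) x :=
      ((ContinuousLinearMap.apply ℝ ℝ (1:ℝ)).analyticAt _).comp hx.fderiv
    simpa only [fderiv_apply_one_eq_deriv] using h2
  have hne : ∀ᶠ x in nhds (0:ℝ), deriv ψ x ≠ 0 := by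
    have hc : ContinuousAt (deriv ψ) 0 := hd.self_of_nhds.continuousAt
    have : deriv ψ 0 ≠ 0 := by rw [hψ'0]; norm_num
    exact hc.eventually_ne this
  filter_upwards [h1, hd, hne, hode] with x hx hdx hnex hodex
  have hψd : HasDerivAt ψ (deriv ψ x) x := hx.differentiableAt.hasDerivAt
  have hψ'd : HasDerivAt (deriv ψ) (deriv (deriv ψ) x) x :=
    hdx.differentiableAt.hasDerivAt
  have hHeq : H = fun α => 6*α*((deriv ψ α)⁻¹ + 2*ψ α) := by
    funext α; rw [hH α, one_div]
  have hHd : HasDerivAt H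
      ((6*1) * ((deriv ψ x)⁻¹ + 2*ψ x)
        + (6*x) * (-(deriv (deriv ψ) x) / (deriv ψ x)^2 + (2 * deriv ψ x))) x := by
    rw [hHeq]
    exact ((hasDerivAt_id x).const_mul 6).mul
      ((hψ'd.inv hnex).add (hψd.const_mul 2))
  rw [hHd.deriv]
  have hpsq : (deriv ψ x)^2 ≠ 0 := pow_ne_zero _ hnex
  field_simp
  linear_combination (-2) * hodex
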